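/- Let P and Z be real symmetric n×n matrices such that R(P) and R(P+Z) are invertible. Then (K(P+Z) − K(P))^T R(P+Z) (K(P+Z) − K(P)) = N(P,Z)^T R(P+Z)^{-1} N(P,Z). -/

import Mathlib

open Matrix BigOperators

noncomputable section

/-- Mean-square stability of the tuple `(F, G_1, …, G_r)` via the Lyapunov characterization. -/
def MSStable {n r : ℕ} (F : Matrix (Fin n) (Fin n) ℝ)
    (G : Fin r → Matrix (Fin n) (Fin n) ℝ) : Prop :=
  ∃ X : Matrix (Fin n) (Fin n) ℝ, X.PosDef ∧
    (-(X * F + Fᵀ * X + ∑ l, (G l)ᵀ * X * G l)).PosDef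

/-- Stochastic detectability of the system `[E_0, …, E_r; F, G_1, …, G_r]`. -/
def StochDetectable {n q r : ℕ} (E0 : Matrix (Fin q) (Fin n) ℝ)
    (E : Fin r → Matrix (Fin q) (Fin n) ℝ)
    (F : Matrix (Fin n) (Fin n) ℝ) (G : Fin r → Matrix (Fin n) (Fin n) ℝ) : Prop :=
  ∃ Θ : Matrix (Fin n) (Fin q) ℝ, MSStable (F + Θ * E0) (fun l => G l + Θ * E l)

/-- The data of the zero-sum linear-quadratic stochastic differential game. -/
structure GameData (n m1 m2 r : ℕ) where
  A : Matrix (Fin n) (Fin n) ℝ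
  C : Fin r → Matrix (Fin n) (Fin n) ℝ
  B1 : Matrix (Fin n) (Fin m1) ℝ
  B2 : Matrix (Fin n) (Fin m2) ℝ
  D1 : Fin r → Matrix (Fin n) (Fin m1) ℝ
  D2 : Fin r → Matrix (Fin n) (Fin m2) ℝ
  Q : Matrix (Fin n) (Fin n) ℝ
  hQ : Q.IsSymm
  S1 : Matrix (Fin m1) (Fin n) ℝ
  S2 : Matrix (Fin m2) (Fin n) ℝ
  R11 : Matrix (Fin m1) (Fin m1) ℝ
  R22 : Matrix (Fin m2) (Fin m2) ℝ
  R12 : Matrix (Fin m1) (Fin m2) ℝ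
  hR11 : R11.IsSymm
  hR22 : R22.IsSymm

namespace GameData

variable {n m1 m2 r : ℕ} (g : GameData n m1 m2 r)

/-- The stacked weighting matrix `S = [S_1; S_2]`. -/
def Sw : Matrix (Fin m1 ⊕ Fin m2) (Fin n) ℝ := fromRows g.S1 g.S2

/-- The full weighting matrix `R = [[R_11, R_12],[R_21, R_22]]` with `R_21 = R_12ᵀ`. -/
def Rw : Matrix (Fin m1 ⊕ Fin m2) (Fin m1 ⊕ Fin m2) ℝ :=
  fromBlocks g.R11 g.R12 g.R12ᵀ g.R22

/-- `S_1(P) = B_1ᵀ P + Σ_l D_{l,1}ᵀ P C_l + S_1`. -/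
def S1P (P : Matrix (Fin n) (Fin n) ℝ) : Matrix (Fin m1) (Fin n) ℝ :=
  g.B1ᵀ * P + ∑ l, (g.D1 l)ᵀ * P * g.C l + g.S1

/-- `S_2(P) = B_2ᵀ P + Σ_l D_{l,2}ᵀ P C_l + S_2`. -/
def S2P (P : Matrix (Fin n) (Fin n) ℝ) : Matrix (Fin m2) (Fin n) ℝ :=
  g.B2ᵀ * P + ∑ l, (g.D2 l)ᵀ * P * g.C l + g.S2

/-- `S(P) = [S_1(P); S_2(P)]`. -/
def SP (P : Matrix (Fin n) (Fin n) ℝ) : Matrix (Fin m1 ⊕ Fin m2) (Fin n) ℝ :=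
  fromRows (g.S1P P) (g.S2P P)

/-- `R_11(P)`. -/
def R11P (P : Matrix (Fin n) (Fin n) ℝ) : Matrix (Fin m1) (Fin m1) ℝ :=
  g.R11 + ∑ l, (g.D1 l)ᵀ * P * g.D1 l

/-- `R_12(P)`. -/
def R12P (P : Matrix (Fin n) (Fin n) ℝ) : Matrix (Fin m1) (Fin m2) ℝ :=
  g.R12 + ∑ l, (g.D1 l)ᵀ * P * g.D2 l

/-- `R_21(P)`. -/
def R21P (P : Matrix (Fin n) (Fin n) ℝ) : Matrix (Fin m2) (Fin m1) ℝ :=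
  g.R12ᵀ + ∑ l, (g.D2 l)ᵀ * P * g.D1 l

/-- `R_22(P)`. -/
def R22P (P : Matrix (Fin n) (Fin n) ℝ) : Matrix (Fin m2) (Fin m2) ℝ :=
  g.R22 + ∑ l, (g.D2 l)ᵀ * P * g.D2 l

/-- `R(P)` assembled from its blocks. -/
def RP (P : Matrix (Fin n) (Fin n) ℝ) : Matrix (Fin m1 ⊕ Fin m2) (Fin m1 ⊕ Fin m2) ℝ :=
  fromBlocks (g.R11P P) (g.R12P P) (g.R21P P) (g.R22P P)

/-- `K(P) = −R(P)⁻¹ S(P)` (stacked feedback gain). -/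
def KP (P : Matrix (Fin n) (Fin n) ℝ) : Matrix (Fin m1 ⊕ Fin m2) (Fin n) ℝ :=
  -((g.RP P)⁻¹ * g.SP P)

/-- `K_1(P)`: the first block of `K(P)`. -/
def K1 (P : Matrix (Fin n) (Fin n) ℝ) : Matrix (Fin m1) (Fin n) ℝ :=
  (g.KP P).submatrix Sum.inl id

/-- `K_2(P)`: the second block of `K(P)`. -/
def K2 (P : Matrix (Fin n) (Fin n) ℝ) : Matrix (Fin m2) (Fin n) ℝ :=
  (g.KP P).submatrix Sum.inr id

/-- `G(P) = PA + AᵀP + Σ_l C_lᵀ P C_l + Q − S(P)ᵀ R(P)⁻¹ S(P)`. -/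
def GP (P : Matrix (Fin n) (Fin n) ℝ) : Matrix (Fin n) (Fin n) ℝ :=
  P * g.A + g.Aᵀ * P + ∑ l, (g.C l)ᵀ * P * g.C l + g.Q
    - (g.SP P)ᵀ * (g.RP P)⁻¹ * g.SP P

/-- `A_{K(P)} = A + B_1 K_1(P) + B_2 K_2(P)`. -/
def AK (P : Matrix (Fin n) (Fin n) ℝ) : Matrix (Fin n) (Fin n) ℝ :=
  g.A + g.B1 * g.K1 P + g.B2 * g.K2 P

/-- `C_{l,K(P)} = C_l + D_{l,1} K_1(P) + D_{l,2} K_2(P)`. -/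
def CK (P : Matrix (Fin n) (Fin n) ℝ) (l : Fin r) : Matrix (Fin n) (Fin n) ℝ :=
  g.C l + g.D1 l * g.K1 P + g.D2 l * g.K2 P

/-- `N_1(P,Z)`. -/
def N1 (P Z : Matrix (Fin n) (Fin n) ℝ) : Matrix (Fin m1) (Fin n) ℝ :=
  g.B1ᵀ * Z + ∑ l, (g.D1 l)ᵀ * Z * g.CK P l

/-- `N_2(P,Z)`. -/
def N2 (P Z : Matrix (Fin n) (Fin n) ℝ) : Matrix (Fin m2) (Fin n) ℝ :=
  g.B2ᵀ * Z + ∑ l, (g.D2 l)ᵀ * Z * g.CK P l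

/-- `N(P,Z) = [N_1(P,Z); N_2(P,Z)]`. -/
def NP (P Z : Matrix (Fin n) (Fin n) ℝ) : Matrix (Fin m1 ⊕ Fin m2) (Fin n) ℝ :=
  fromRows (g.N1 P Z) (g.N2 P Z)

/-- Membership in `Dom G`: `R_22(P) ≻ 0` and `R_11(P) ≺ 0`. -/
def MemDomG (P : Matrix (Fin n) (Fin n) ℝ) : Prop :=
  (g.R22P P).PosDef ∧ (-(g.R11P P)).PosDef

/-- `Z` satisfies the inner Riccati equation at `P`. -/
def InnerRiccati (P Z : Matrix (Fin n) (Fin n) ℝ) : Prop :=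
  g.GP P + Z * g.AK P + (g.AK P)ᵀ * Z + ∑ l, (g.CK P l)ᵀ * Z * g.CK P l
    - (g.N2 P Z)ᵀ * (g.R22P (P + Z))⁻¹ * g.N2 P Z = 0

/-- `A_L = A + B_1 K_1(0) + B_2 K_2(0) + B_2 L`. -/
def AL (L : Matrix (Fin m2) (Fin n) ℝ) : Matrix (Fin n) (Fin n) ℝ :=
  g.A + g.B1 * g.K1 0 + g.B2 * g.K2 0 + g.B2 * L

/-- `C_{lL} = C_l + D_{l,1} K_1(0) + D_{l,2} K_2(0) + D_{l,2} L`. -/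
def CL (L : Matrix (Fin m2) (Fin n) ℝ) (l : Fin r) : Matrix (Fin n) (Fin n) ℝ :=
  g.C l + g.D1 l * g.K1 0 + g.D2 l * g.K2 0 + g.D2 l * L

/-- `Q_L = Q − S(0)ᵀ R(0)⁻¹ S(0) + Lᵀ R_22 L`. -/
def QL (L : Matrix (Fin m2) (Fin n) ℝ) : Matrix (Fin n) (Fin n) ℝ :=
  g.Q - (g.SP 0)ᵀ * (g.RP 0)⁻¹ * g.SP 0 + Lᵀ * g.R22 * L

/-- `S_L = R_12 L`. -/
def SL (L : Matrix (Fin m2) (Fin n) ℝ) : Matrix (Fin m1) (Fin n) ℝ := g.R12 * L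

/-- The linear term `B_1ᵀ P + Σ_l D_{l,1}ᵀ P C_{lL} + S_L` in the `L`-Riccati equation. -/
def S1L (L : Matrix (Fin m2) (Fin n) ℝ) (P : Matrix (Fin n) (Fin n) ℝ) :
    Matrix (Fin m1) (Fin n) ℝ :=
  g.B1ᵀ * P + ∑ l, (g.D1 l)ᵀ * P * g.CL L l + g.SL L

/-- Left-hand side of the algebraic Riccati equation associated with `L`. -/
def AREL (L : Matrix (Fin m2) (Fin n) ℝ) (P : Matrix (Fin n) (Fin n) ℝ) :
    Matrix (Fin n) (Fin n) ℝ :=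
  P * g.AL L + (g.AL L)ᵀ * P + ∑ l, (g.CL L l)ᵀ * P * g.CL L l + g.QL L
    - (g.S1L L P)ᵀ * (g.R11P P)⁻¹ * g.S1L L P

/-- `K_L(P) = −(R_11 + Σ_l D_{l,1}ᵀ P D_{l,1})⁻¹ (B_1ᵀ P + Σ_l D_{l,1}ᵀ P C_{lL} + S_L)`. -/
def KL (L : Matrix (Fin m2) (Fin n) ℝ) (P : Matrix (Fin n) (Fin n) ℝ) :
    Matrix (Fin m1) (Fin n) ℝ :=
  -((g.R11P P)⁻¹ * g.S1L L P)

/-- `P̃` is a stabilizing solution of the `L`-Riccati equation. -/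
def IsStabSolL (L : Matrix (Fin m2) (Fin n) ℝ) (P : Matrix (Fin n) (Fin n) ℝ) : Prop :=
  P.IsSymm ∧ g.AREL L P = 0 ∧ (-(g.R11P P)).PosDef ∧
    MSStable (g.AL L + g.B1 * g.KL L P) (fun l => g.CL L l + g.D1 l * g.KL L P)

/-- `L ∈ 𝒜`. -/
def MemA (L : Matrix (Fin m2) (Fin n) ℝ) : Prop :=
  MSStable (g.AL L) (g.CL L) ∧ ∃ P, g.IsStabSolL L P

end GameData

/- Auxiliary lemmas -/
section AuxProof
section Aux
variable {n m1 m2 r : ℕ}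

lemma sum_fromRows' {R : Type*} [AddCommMonoid R] (f : Fin r → Matrix (Fin m1) (Fin n) R)
    (h : Fin r → Matrix (Fin m2) (Fin n) R) :
    ∑ l, fromRows (f l) (h l) = fromRows (∑ l, f l) (∑ l, h l) := by
  ext (i|i) j <;> simp [Matrix.sum_apply]

lemma fromRows_add' {R : Type*} [AddCommMonoid R] (A C : Matrix (Fin m1) (Fin n) R)
    (B D : Matrix (Fin m2) (Fin n) R) :
    fromRows A B + fromRows C D = fromRows (A + C) (B + D) := by
  ext (i|i) j <;> simp

lemma sum_fromBlocks' {R : Type*} [AddCommMonoid R]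
    (f : Fin r → Matrix (Fin m1) (Fin m1) R) (h : Fin r → Matrix (Fin m1) (Fin m2) R)
    (f' : Fin r → Matrix (Fin m2) (Fin m1) R) (h' : Fin r → Matrix (Fin m2) (Fin m2) R) :
    ∑ l, fromBlocks (f l) (h l) (f' l) (h' l)
      = fromBlocks (∑ l, f l) (∑ l, h l) (∑ l, f' l) (∑ l, h' l) := by
  ext (i|i) (j|j) <;> simp [Matrix.sum_apply]

end Aux

namespace GameData
variable {n m1 m2 r : ℕ} (g : GameData n m1 m2 r)

def Bw : Matrix (Fin n) (Fin m1 ⊕ Fin m2) ℝ := fromCols g.B1 g.B2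
def Dw (l : Fin r) : Matrix (Fin n) (Fin m1 ⊕ Fin m2) ℝ := fromCols (g.D1 l) (g.D2 l)

lemma SP_eq (X : Matrix (Fin n) (Fin n) ℝ) :
    g.SP X = (g.Bw)ᵀ * X + (∑ l, (g.Dw l)ᵀ * X * g.C l) + g.Sw := by
  simp only [SP, S1P, S2P, Sw, Bw, Dw, transpose_fromCols, fromRows_mul,
    sum_fromRows', fromRows_add']

lemma Rw_transpose : g.Rwᵀ = g.Rw := by
  simp [Rw, fromBlocks_transpose, g.hR11.eq, g.hR22.eq]

lemma RP_eq (X : Matrix (Fin n) (Fin n) ℝ) :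
    g.RP X = g.Rw + ∑ l, (g.Dw l)ᵀ * X * g.Dw l := by
  simp only [RP, R11P, R12P, R21P, R22P, Rw, Dw, transpose_fromCols, fromRows_mul,
    mul_fromCols, fromRows_fromCols_eq_fromBlocks, fromCols_fromRows_eq_fromBlocks, sum_fromBlocks', fromBlocks_add]

lemma RP_transpose' {X : Matrix (Fin n) (Fin n) ℝ} (hX : X.IsSymm) :
    (g.RP X)ᵀ = g.RP X := by
  rw [RP_eq, transpose_add, g.Rw_transpose]
  congr 1
  rw [Matrix.transpose_sum]
  refine Finset.sum_congr rfl fun l _ => ?_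
  rw [transpose_mul, transpose_mul, transpose_transpose, hX.eq, Matrix.mul_assoc]

lemma KP_fromRows (X : Matrix (Fin n) (Fin n) ℝ) :
    g.KP X = fromRows (g.K1 X) (g.K2 X) := by
  ext (i|i) j <;> rfl

lemma CK_eq (P : Matrix (Fin n) (Fin n) ℝ) (l : Fin r) :
    g.CK P l = g.C l + g.Dw l * g.KP P := by
  rw [CK, KP_fromRows, Dw, fromCols_mul_fromRows, add_assoc]

lemma NP_eq (P Z : Matrix (Fin n) (Fin n) ℝ) :
    g.NP P Z = (g.Bw)ᵀ * Z + ∑ l, (g.Dw l)ᵀ * Z * g.CK P l := by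
  simp only [NP, N1, N2, Bw, Dw, transpose_fromCols, fromRows_mul,
    sum_fromRows', fromRows_add']

lemma Nkey (P Z : Matrix (Fin n) (Fin n) ℝ) (hRP : IsUnit (g.RP P).det) :
    g.SP (P + Z) + g.RP (P + Z) * g.KP P = g.NP P Z := by
  have h0 : g.RP P * g.KP P = -(g.SP P) := by
    rw [KP, Matrix.mul_neg, ← Matrix.mul_assoc, Matrix.mul_nonsing_inv _ hRP, Matrix.one_mul]
  have e1 : g.SP (P + Z) = g.SP P + ((g.Bw)ᵀ * Z + ∑ l, (g.Dw l)ᵀ * Z * g.C l) := by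
    rw [SP_eq, SP_eq]
    simp only [Matrix.mul_add, Matrix.add_mul, Finset.sum_add_distrib]
    abel
  have e2 : g.RP (P + Z) = g.RP P + ∑ l, (g.Dw l)ᵀ * Z * g.Dw l := by
    rw [RP_eq, RP_eq]
    simp only [Matrix.mul_add, Matrix.add_mul, Finset.sum_add_distrib]
    abel
  rw [e1, e2, Matrix.add_mul, h0, NP_eq]
  simp only [CK_eq, Matrix.mul_add, Finset.sum_add_distrib, Matrix.mul_assoc]
  rw [Matrix.sum_mul]
  simp only [Matrix.mul_assoc]
  abel

end GameData

end AuxProof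

/-- the quadratic form of the gain increment equals `N(P,Z)ᵀ R(P+Z)⁻¹ N(P,Z)`. -/
theorem statement3 {n m1 m2 r : ℕ} (g : GameData n m1 m2 r)
    (P Z : Matrix (Fin n) (Fin n) ℝ) (hP : P.IsSymm) (hZ : Z.IsSymm)
    (hRP : IsUnit (g.RP P).det) (hRPZ : IsUnit (g.RP (P + Z)).det) :
    (g.KP (P + Z) - g.KP P)ᵀ * g.RP (P + Z) * (g.KP (P + Z) - g.KP P)
      = (g.NP P Z)ᵀ * (g.RP (P + Z))⁻¹ * g.NP P Z := by
  set R' := g.RP (P + Z) with hR'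
  set N := g.NP P Z with hN
  have hsym : R'ᵀ = R' := g.RP_transpose' (hP.add hZ)
  have hinv : R'⁻¹ * R' = 1 := Matrix.nonsing_inv_mul _ hRPZ
  have hdiff : g.KP (P + Z) - g.KP P = -(R'⁻¹ * N) := by
    rw [hN, ← g.Nkey P Z hRP, Matrix.mul_add, ← hR', ← Matrix.mul_assoc, hinv,
      Matrix.one_mul, neg_add, GameData.KP, sub_eq_add_neg]
  rw [hdiff]
  simp only [transpose_neg, Matrix.neg_mul, Matrix.mul_neg, neg_neg]
  rw [transpose_mul, Matrix.transpose_nonsing_inv, hsym, Matrix.mul_assoc Nᵀ R'⁻¹ R', hinv,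
    Matrix.mul_one, ← Matrix.mul_assoc]
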